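/- Let γ > 2 and let ε ∈ C¹(ℝ) satisfy ε(x) = 0 for |x| < 1/2 and for |x| ≥ 1. Then there exists a constant c > 0, depending only on γ, ‖ε‖_∞ and ‖ε′‖_∞, such that for all real numbers a, b: |∫_{−∞}^{+∞} e^{−2πi(au + b|u|^γ)} ε(u) du| ≤ c (1 + |(a,b)|)^{−1/2}, where |(a,b)| = √(a² + b²). -/

import Mathlib

open Real Set

open MeasureTheory intervalIntegral

set_option maxHeartbeats 2000000

noncomputable section

lemma L1 (γ a b M ρ α β : ℝ) (hγ : 2 < γ) (hM : 0 < M) (hρ : 0 < ρ)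
    (hα : 1/2 ≤ α) (hβ : β ≤ 1) (hαβ : α ≤ β)
    (ν : ℝ → ℝ) (hν : ContDiff ℝ 1 ν) (hν1 : ∀ x, |ν x| ≤ M) (hν2 : ∀ x, |deriv ν x| ≤ M)
    (hlow : ∀ u ∈ Icc α β, ρ ≤ |a + b * γ * u ^ (γ - 1)|) :
    ‖∫ u in α..β, Complex.exp (-(2 * (π:ℂ) * Complex.I) * ((a * u + b * u ^ γ : ℝ) : ℂ)) * ((ν u : ℝ) : ℂ)‖ ≤ M / ρ := by
  have hπ := Real.pi_gt_three
  have huIcc : uIcc α β = Icc α β := uIcc_of_le hαβ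
  set c2 : ℂ := -(2 * (π:ℂ) * Complex.I) with hc2
  have hc2ne : c2 ≠ 0 := by
    simp [hc2, Complex.ext_iff]
  have hc2norm : ‖c2‖ = 2 * π := by
    simp [hc2, abs_of_pos Real.pi_pos]
  set ψ : ℝ → ℝ := fun u => a + b * γ * u ^ (γ - 1) with hψdef
  set ψ' : ℝ → ℝ := fun u => b * γ * ((γ - 1) * u ^ (γ - 2)) with hψ'def
  have hpos : ∀ u ∈ Icc α β, (0:ℝ) < u := fun u hu => lt_of_lt_of_le (by linarith) hu.1
  have hψlow : ∀ u ∈ Icc α β, ρ ≤ |ψ u| := hlow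
  have hψne : ∀ u ∈ Icc α β, ψ u ≠ 0 := by
    intro u hu h
    have := hψlow u hu
    rw [h] at this; simp at this; linarith
  have hψderiv : ∀ u ∈ Icc α β, HasDerivAt ψ (ψ' u) u := by
    intro u hu
    have h1 : HasDerivAt (fun x : ℝ => x ^ (γ - 1)) ((γ - 1) * u ^ (γ - 1 - 1)) u :=
      Real.hasDerivAt_rpow_const (Or.inl (ne_of_gt (hpos u hu)))
    have h2 := (h1.const_mul (b * γ)).const_add a
    rw [show γ - 1 - 1 = γ - 2 by ring] at h2
    exact h2
  set φ : ℝ → ℝ := fun u => a * u + b * u ^ γ with hφdef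
  set E : ℝ → ℂ := fun u => Complex.exp (c2 * ((φ u : ℝ) : ℂ)) with hEdef
  have hEnorm : ∀ u : ℝ, ‖E u‖ = 1 := by
    intro u
    rw [hEdef]
    simp [Complex.norm_exp, hc2]
  have hφderiv : ∀ u ∈ Icc α β, HasDerivAt φ (ψ u) u := by
    intro u hu
    have h1 : HasDerivAt (fun x : ℝ => x ^ γ) (γ * u ^ (γ - 1)) u :=
      Real.hasDerivAt_rpow_const (Or.inl (ne_of_gt (hpos u hu)))
    have h2 := ((hasDerivAt_id u).const_mul a).add (h1.const_mul b)
    refine h2.congr_deriv ?_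
    simp only [hψdef]; ring
  have hEderiv : ∀ u ∈ Icc α β, HasDerivAt E (c2 * (ψ u) * E u) u := by
    intro u hu
    have h1 := (((hφderiv u hu).ofReal_comp).const_mul c2).cexp
    convert h1 using 1
    ring
  set g : ℝ → ℂ := fun u => (ν u : ℂ) / (c2 * ψ u) with hgdef
  set g' : ℝ → ℂ := fun u =>
    ((deriv ν u : ℝ) : ℂ) / (c2 * ψ u) - (ν u : ℂ) * (ψ' u) / (c2 * (ψ u)^2) with hg'def
  have hνderiv : ∀ u : ℝ, HasDerivAt ν (deriv ν u) u := fun u =>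
    ((hν.differentiable one_ne_zero) u).hasDerivAt
  have hgderiv : ∀ u ∈ Icc α β, HasDerivAt g (g' u) u := by
    intro u hu
    have hnum : HasDerivAt (fun x : ℝ => ((ν x : ℝ) : ℂ)) ((deriv ν u : ℝ) : ℂ) u :=
      (hνderiv u).ofReal_comp
    have hden : HasDerivAt (fun x : ℝ => c2 * ((ψ x : ℝ) : ℂ)) (c2 * ((ψ' u : ℝ) : ℂ)) u :=
      ((hψderiv u hu).ofReal_comp).const_mul c2
    have hdne : c2 * ((ψ u : ℝ) : ℂ) ≠ 0 := by
      apply mul_ne_zero hc2ne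
      exact_mod_cast (hψne u hu)
    have h := hnum.div hden hdne
    refine h.congr_deriv ?_
    rw [hg'def]
    have hψc : ((ψ u : ℝ) : ℂ) ≠ 0 := by exact_mod_cast (hψne u hu)
    field_simp
  -- continuity facts
  have hψcont : ContinuousOn ψ (Icc α β) := by
    apply continuousOn_const.add
    apply continuousOn_const.mul
    exact continuousOn_id.rpow_const (fun x hx => Or.inl (ne_of_gt (hpos x hx)))
  have hψ'cont : ContinuousOn ψ' (Icc α β) := by
    apply continuousOn_const.mul
    apply continuousOn_const.mul
    exact continuousOn_id.rpow_const (fun x hx => Or.inl (ne_of_gt (hpos x hx)))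
  have hφcont : ContinuousOn φ (Icc α β) := by
    apply ContinuousOn.add
    · exact (continuous_const.mul continuous_id).continuousOn
    · exact continuousOn_const.mul
        (continuousOn_id.rpow_const (fun x hx => Or.inl (ne_of_gt (hpos x hx))))
  have hEcont : ContinuousOn E (Icc α β) := by
    apply Complex.continuous_exp.comp_continuousOn
    exact continuousOn_const.mul (Complex.continuous_ofReal.comp_continuousOn hφcont)
  have hψCne : ∀ u ∈ Icc α β, ((ψ u : ℝ) : ℂ) ≠ 0 := by
    intro u hu; exact_mod_cast (hψne u hu)
  have hg'cont : ContinuousOn g' (Icc α β) := by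
    apply ContinuousOn.sub
    · apply ContinuousOn.div
      · exact Complex.continuous_ofReal.comp_continuousOn
          ((hν.continuous_deriv le_rfl).continuousOn)
      · exact continuousOn_const.mul (Complex.continuous_ofReal.comp_continuousOn hψcont)
      · intro u hu; exact mul_ne_zero hc2ne (hψCne u hu)
    · apply ContinuousOn.div
      · exact (Complex.continuous_ofReal.comp_continuousOn (hν.continuous.continuousOn)).mul
          (Complex.continuous_ofReal.comp_continuousOn hψ'cont)
      · exact continuousOn_const.mul
          ((Complex.continuous_ofReal.comp_continuousOn hψcont).pow 2)
      · intro u hu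
        exact mul_ne_zero hc2ne (pow_ne_zero 2 (hψCne u hu))
  have hE'cont : ContinuousOn (fun u => c2 * (ψ u : ℂ) * E u) (Icc α β) := by
    exact (continuousOn_const.mul (Complex.continuous_ofReal.comp_continuousOn hψcont)).mul hEcont
  have hg'int : IntervalIntegrable g' volume α β :=
    (hg'cont.mono (by rw [huIcc])).intervalIntegrable
  have hE'int : IntervalIntegrable (fun u => c2 * (ψ u : ℂ) * E u) volume α β :=
    (hE'cont.mono (by rw [huIcc])).intervalIntegrable
  -- rewrite integrand
  have hcongr : ∫ u in α..β, E u * ((ν u : ℝ) : ℂ) =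
      ∫ u in α..β, g u * (c2 * (ψ u : ℂ) * E u) := by
    apply integral_congr
    intro u hu
    rw [huIcc] at hu
    have h1 : ((ψ u : ℝ) : ℂ) ≠ 0 := hψCne u hu
    rw [hgdef]
    field_simp
  have hibp := integral_mul_deriv_eq_deriv_mul
    (fun x hx => hgderiv x (huIcc ▸ hx)) (fun x hx => hEderiv x (huIcc ▸ hx)) hg'int hE'int
  -- goal is the integral of E u * ν u
  have hgoal : (∫ u in α..β, Complex.exp (-(2 * (π:ℂ) * Complex.I) * ((a * u + b * u ^ γ : ℝ) : ℂ)) * ((ν u : ℝ) : ℂ)) = ∫ u in α..β, E u * ((ν u : ℝ) : ℂ) := by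
    apply integral_congr
    intro u hu
    simp only [hEdef, hφdef, hc2]
  rw [hgoal, hcongr, hibp]
  -- bound the three pieces
  have hgbound : ∀ u ∈ Icc α β, ‖g u‖ ≤ M / (2 * π * ρ) := by
    intro u hu
    rw [hgdef]
    simp only [norm_div, norm_mul, hc2norm, Complex.norm_real, Real.norm_eq_abs]
    apply div_le_div₀ hM.le (hν1 u) (by positivity)
    calc 2 * π * ρ ≤ 2 * π * |ψ u| := by
          apply mul_le_mul_of_nonneg_left (hψlow u hu) (by positivity)
      _ = 2 * π * |ψ u| := rfl
  have hAptw : ∀ u ∈ Icc α β, ‖((deriv ν u : ℝ) : ℂ) / (c2 * (ψ u : ℂ)) * E u‖ ≤ M / (2 * π * ρ) := by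
    intro u hu
    rw [norm_mul, hEnorm, mul_one, norm_div, norm_mul, hc2norm]
    simp only [Complex.norm_real, Real.norm_eq_abs]
    apply div_le_div₀ hM.le (hν2 u) (by positivity)
    exact mul_le_mul_of_nonneg_left (hψlow u hu) (by positivity)
  have hA : ‖∫ u in α..β, ((deriv ν u : ℝ) : ℂ) / (c2 * (ψ u : ℂ)) * E u‖ ≤ M / (2 * π * ρ) * (1/2) := by
    have h1 := intervalIntegral.norm_integral_le_of_norm_le_const
      (C := M / (2 * π * ρ)) (f := fun u => ((deriv ν u : ℝ) : ℂ) / (c2 * (ψ u : ℂ)) * E u)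
      (a := α) (b := β) ?_
    · refine h1.trans ?_
      apply mul_le_mul_of_nonneg_left _ (by positivity)
      rw [abs_of_nonneg (by linarith)]
      linarith
    · intro u hu
      rw [uIoc_of_le hαβ] at hu
      exact hAptw u ⟨le_of_lt hu.1, hu.2⟩
  -- FTC for 1/ψ
  have hint2 : ∫ u in α..β, |ψ' u| / (ψ u)^2 ≤ 2 / ρ := by
    have hFTC : ∫ u in α..β, (-(ψ' u) / (ψ u)^2) = (ψ β)⁻¹ - (ψ α)⁻¹ := by
      apply integral_eq_sub_of_hasDerivAt
      · intro u hu
        rw [huIcc] at hu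
        exact (hψderiv u hu).inv (hψne u hu)
      · apply ContinuousOn.intervalIntegrable
        rw [huIcc]
        exact (hψ'cont.neg).div (hψcont.pow 2) (fun u hu => pow_ne_zero 2 (hψne u hu))
    have hbα : |(ψ α)⁻¹| ≤ 1/ρ := by
      rw [abs_inv, one_div]
      exact inv_anti₀ hρ (hψlow α ⟨le_refl α, hαβ⟩)
    have hbβ : |(ψ β)⁻¹| ≤ 1/ρ := by
      rw [abs_inv, one_div]
      exact inv_anti₀ hρ (hψlow β ⟨hαβ, le_refl β⟩)
    rcases le_or_gt 0 b with hb | hb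
    · have heq : EqOn (fun u => |ψ' u| / (ψ u)^2) (fun u => -((-(ψ' u)) / (ψ u)^2)) (uIcc α β) := by
        intro u hu
        rw [huIcc] at hu
        have h0 : 0 ≤ ψ' u := by
          rw [hψ'def]
          have hu0 := hpos u hu
          have : (0:ℝ) ≤ u ^ (γ - 2) := (Real.rpow_pos_of_pos hu0 _).le
          apply mul_nonneg (mul_nonneg hb (by linarith)) (mul_nonneg (by linarith) this)
        simp only
        rw [abs_of_nonneg h0]
        ring
      rw [integral_congr heq, intervalIntegral.integral_neg, hFTC]
      have h2ρ : 2/ρ = 1/ρ + 1/ρ := by ring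
      have := le_abs_self (ψ α)⁻¹
      have := neg_abs_le (ψ β)⁻¹
      linarith
    · have heq : EqOn (fun u => |ψ' u| / (ψ u)^2) (fun u => (-(ψ' u)) / (ψ u)^2) (uIcc α β) := by
        intro u hu
        rw [huIcc] at hu
        have h0 : ψ' u ≤ 0 := by
          rw [hψ'def]
          have hu0 := hpos u hu
          have h1 : (0:ℝ) ≤ u ^ (γ - 2) := (Real.rpow_pos_of_pos hu0 _).le
          have h2 : (0:ℝ) ≤ (γ - 1) * u ^ (γ - 2) := mul_nonneg (by linarith) h1
          have h3 : b * γ ≤ 0 := mul_nonpos_of_nonpos_of_nonneg hb.le (by linarith)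
          exact mul_nonpos_of_nonpos_of_nonneg h3 h2
        simp only
        rw [abs_of_nonpos h0]
      rw [integral_congr heq, hFTC]
      have h2ρ : 2/ρ = 1/ρ + 1/ρ := by ring
      have := le_abs_self (ψ β)⁻¹
      have := neg_abs_le (ψ α)⁻¹
      linarith
  -- bound the B piece
  have hBcont : ContinuousOn (fun u => (ν u : ℂ) * ((ψ' u : ℝ) : ℂ) / (c2 * ((ψ u : ℝ) : ℂ)^2) * E u) (Icc α β) := by
    apply ContinuousOn.mul _ hEcont
    apply ContinuousOn.div
    · exact (Complex.continuous_ofReal.comp_continuousOn (hν.continuous.continuousOn)).mul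
        (Complex.continuous_ofReal.comp_continuousOn hψ'cont)
    · exact continuousOn_const.mul ((Complex.continuous_ofReal.comp_continuousOn hψcont).pow 2)
    · intro u hu
      exact mul_ne_zero hc2ne (pow_ne_zero 2 (hψCne u hu))
  have hBptw : ∀ u ∈ Icc α β, ‖(ν u : ℂ) * ((ψ' u : ℝ) : ℂ) / (c2 * ((ψ u : ℝ) : ℂ)^2) * E u‖ ≤ (M / (2 * π)) * (|ψ' u| / (ψ u)^2) := by
    intro u hu
    rw [norm_mul, hEnorm, mul_one, norm_div, norm_mul, norm_mul, hc2norm, norm_pow]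
    simp only [Complex.norm_real, Real.norm_eq_abs]
    rw [div_mul_div_comm]
    have hne := hψne u hu
    apply div_le_div₀ (by positivity) _ (by positivity) _
    · exact mul_le_mul_of_nonneg_right (hν1 u) (abs_nonneg _)
    · rw [sq_abs]
  have hB : ‖∫ u in α..β, (ν u : ℂ) * ((ψ' u : ℝ) : ℂ) / (c2 * ((ψ u : ℝ) : ℂ)^2) * E u‖ ≤ (M / (2 * π)) * (2 / ρ) := by
    calc ‖∫ u in α..β, (ν u : ℂ) * ((ψ' u : ℝ) : ℂ) / (c2 * ((ψ u : ℝ) : ℂ)^2) * E u‖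
        ≤ ∫ u in α..β, ‖(ν u : ℂ) * ((ψ' u : ℝ) : ℂ) / (c2 * ((ψ u : ℝ) : ℂ)^2) * E u‖ :=
          intervalIntegral.norm_integral_le_integral_norm hαβ
      _ ≤ ∫ u in α..β, (M / (2 * π)) * (|ψ' u| / (ψ u)^2) := by
          apply integral_mono_on hαβ
          · apply ContinuousOn.intervalIntegrable
            rw [huIcc]
            exact hBcont.norm
          · apply ContinuousOn.intervalIntegrable
            rw [huIcc]
            exact continuousOn_const.mul ((hψ'cont.abs).div (hψcont.pow 2)
              (fun u hu => pow_ne_zero 2 (hψne u hu)))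
          · exact hBptw
      _ = (M / (2 * π)) * ∫ u in α..β, |ψ' u| / (ψ u)^2 := by
          rw [intervalIntegral.integral_const_mul]
      _ ≤ (M / (2 * π)) * (2 / ρ) := by
          apply mul_le_mul_of_nonneg_left hint2 (by positivity)
  have hAcont : ContinuousOn (fun u => ((deriv ν u : ℝ) : ℂ) / (c2 * ((ψ u : ℝ) : ℂ)) * E u) (Icc α β) := by
    apply ContinuousOn.mul _ hEcont
    apply ContinuousOn.div
    · exact Complex.continuous_ofReal.comp_continuousOn ((hν.continuous_deriv le_rfl).continuousOn)
    · exact continuousOn_const.mul (Complex.continuous_ofReal.comp_continuousOn hψcont)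
    · intro u hu; exact mul_ne_zero hc2ne (hψCne u hu)
  have hAint : IntervalIntegrable (fun u => ((deriv ν u : ℝ) : ℂ) / (c2 * ((ψ u : ℝ) : ℂ)) * E u) volume α β := by
    apply ContinuousOn.intervalIntegrable; rw [huIcc]; exact hAcont
  have hBint : IntervalIntegrable (fun u => (ν u : ℂ) * ((ψ' u : ℝ) : ℂ) / (c2 * ((ψ u : ℝ) : ℂ)^2) * E u) volume α β := by
    apply ContinuousOn.intervalIntegrable; rw [huIcc]; exact hBcont
  have hsplit : ∫ u in α..β, g' u * E u =
      (∫ u in α..β, ((deriv ν u : ℝ) : ℂ) / (c2 * ((ψ u : ℝ) : ℂ)) * E u) -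
      ∫ u in α..β, (ν u : ℂ) * ((ψ' u : ℝ) : ℂ) / (c2 * ((ψ u : ℝ) : ℂ)^2) * E u := by
    rw [← intervalIntegral.integral_sub hAint hBint]
    apply integral_congr
    intro u hu
    simp only [hg'def]
    ring
  have hgb : ‖g β * E β‖ ≤ M / (2 * π * ρ) := by
    rw [norm_mul, hEnorm, mul_one]
    exact hgbound β ⟨hαβ, le_refl β⟩
  have hga : ‖g α * E α‖ ≤ M / (2 * π * ρ) := by
    rw [norm_mul, hEnorm, mul_one]
    exact hgbound α ⟨le_refl α, hαβ⟩
  calc ‖g β * E β - g α * E α - ∫ x in α..β, g' x * E x‖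
      ≤ ‖g β * E β - g α * E α‖ + ‖∫ x in α..β, g' x * E x‖ := norm_sub_le _ _
    _ ≤ (‖g β * E β‖ + ‖g α * E α‖) +
        (‖∫ u in α..β, ((deriv ν u : ℝ) : ℂ) / (c2 * ((ψ u : ℝ) : ℂ)) * E u‖ +
         ‖∫ u in α..β, (ν u : ℂ) * ((ψ' u : ℝ) : ℂ) / (c2 * ((ψ u : ℝ) : ℂ)^2) * E u‖) := by
        apply add_le_add (norm_sub_le _ _)
        rw [hsplit]
        exact norm_sub_le _ _
    _ ≤ (M / (2 * π * ρ) + M / (2 * π * ρ)) + (M / (2 * π * ρ) * (1/2) + (M / (2 * π)) * (2 / ρ)) := by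
        exact add_le_add (add_le_add hgb hga) (add_le_add hA hB)
    _ = M / ρ * (9 / (4 * π)) := by
        field_simp
        ring
    _ ≤ M / ρ * 1 := by
        apply mul_le_mul_of_nonneg_left _ (by positivity)
        rw [div_le_one (by positivity)]
        nlinarith
    _ = M / ρ := mul_one _

lemma slope_lb (γ : ℝ) (hγ : 2 < γ) {v u : ℝ} (hv : 1/2 ≤ v) (hu : u ≤ 1) (hvu : v ≤ u) :
    (γ - 1) * (2:ℝ) ^ ((2:ℝ) - γ) * (u - v) ≤ u ^ (γ - 1) - v ^ (γ - 1) := by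
  rcases eq_or_lt_of_le hvu with h | h
  · rw [h]; simp
  · obtain ⟨c, hc, hslope⟩ := exists_hasDerivAt_eq_slope (fun x : ℝ => x ^ (γ - 1))
      (fun x : ℝ => (γ - 1) * x ^ (γ - 1 - 1)) h
      (by
        apply ContinuousOn.rpow_const continuousOn_id
        intro x hx
        exact Or.inl (by intro h0; simp only [id_eq] at h0; rw [h0] at hx; linarith [hx.1])
        )
      (fun x hx => Real.hasDerivAt_rpow_const (Or.inl (by intro h0; rw [h0] at hx; linarith [hx.1, hv])))
    have hc12 : 1/2 ≤ c := by linarith [hc.1]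
    have hc0 : (0:ℝ) < c := by linarith
    have hlb : (2:ℝ) ^ ((2:ℝ) - γ) ≤ c ^ (γ - 1 - 1) := by
      have h1 : ((1:ℝ)/2) ^ (γ - 2) ≤ c ^ (γ - 2) :=
        Real.rpow_le_rpow (by norm_num) hc12 (by linarith)
      have h2 : ((1:ℝ)/2) ^ (γ - 2) = (2:ℝ) ^ ((2:ℝ) - γ) := by
        rw [show ((1:ℝ)/2) = (2:ℝ)⁻¹ by norm_num, Real.inv_rpow (by norm_num),
          show (2:ℝ) - γ = -(γ - 2) by ring, Real.rpow_neg (by norm_num)]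
      rw [show γ - 1 - 1 = γ - 2 by ring]
      linarith
    have heq : u ^ (γ - 1) - v ^ (γ - 1) = (γ - 1) * c ^ (γ - 1 - 1) * (u - v) := by
      rw [hslope, div_mul_cancel₀ _ (sub_ne_zero.mpr h.ne')]
    rw [heq]
    have huv : 0 ≤ u - v := by linarith
    apply mul_le_mul_of_nonneg_right _ huv
    apply mul_le_mul_of_nonneg_left hlb (by linarith)

lemma L2 (γ M : ℝ) (hγ : 2 < γ) (hM : 0 < M) (a b : ℝ)
    (ν : ℝ → ℝ) (hν : ContDiff ℝ 1 ν) (hν1 : ∀ x, |ν x| ≤ M) (hν2 : ∀ x, |deriv ν x| ≤ M) :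
    ‖∫ u in (1/2 : ℝ)..1, Complex.exp (-(2 * (π:ℂ) * Complex.I) * ((a * u + b * u ^ γ : ℝ) : ℂ)) * ((ν u : ℝ) : ℂ)‖ ≤
      (6 * M + 6 * M / Real.sqrt (γ * (γ - 1) * (2:ℝ) ^ ((2:ℝ) - γ) / (2 * (2 * γ + 1)))) *
        (1 + Real.sqrt (a ^ 2 + b ^ 2)) ^ (-(1/2) : ℝ) := by
  have hπ := Real.pi_gt_three
  set K : ℝ := Real.sqrt (γ * (γ - 1) * (2:ℝ) ^ ((2:ℝ) - γ) / (2 * (2 * γ + 1))) with hKdef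
  have hApos : 0 < γ * (γ - 1) * (2:ℝ) ^ ((2:ℝ) - γ) := by
    have := Real.rpow_pos_of_pos (show (0:ℝ) < 2 by norm_num) ((2:ℝ) - γ)
    exact mul_pos (by nlinarith) this
  have hK : 0 < K := Real.sqrt_pos.mpr (by positivity)
  set C₁ : ℝ := 6 * M + 6 * M / K with hC₁def
  have hC₁ : 0 < C₁ := by positivity
  have h6MC₁ : 6 * M ≤ C₁ := by
    rw [hC₁def]
    have : 0 ≤ 6 * M / K := by positivity
    linarith
  set r : ℝ := Real.sqrt (a ^ 2 + b ^ 2) with hrdef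
  have hr0 : 0 ≤ r := Real.sqrt_nonneg _
  have hsq1r : 0 < Real.sqrt (1 + r) := Real.sqrt_pos.mpr (by linarith)
  have hrpow : (1 + r) ^ (-(1/2) : ℝ) = (Real.sqrt (1 + r))⁻¹ := by
    rw [Real.rpow_neg (by linarith), ← Real.sqrt_eq_rpow]
  rw [hrpow]
  have hEn : ∀ t : ℝ, ‖Complex.exp (-(2 * (π:ℂ) * Complex.I) * ((t : ℝ) : ℂ))‖ = 1 := by
    intro t
    simp [Complex.norm_exp]
  have hnorm1 : ∀ u : ℝ, ‖Complex.exp (-(2 * (π:ℂ) * Complex.I) * ((a * u + b * u ^ γ : ℝ) : ℂ)) * ((ν u : ℝ) : ℂ)‖ ≤ M := by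
    intro u
    rw [norm_mul, hEn, one_mul]
    simpa using hν1 u
  have hmain : ‖∫ u in (1/2 : ℝ)..1, Complex.exp (-(2 * (π:ℂ) * Complex.I) * ((a * u + b * u ^ γ : ℝ) : ℂ)) * ((ν u : ℝ) : ℂ)‖ ≤ C₁ / Real.sqrt (1 + r) := by
    rcases le_or_gt r 1 with hr | hr
    · -- small frequencies: trivial bound
      have h1 : ‖∫ u in (1/2 : ℝ)..1, Complex.exp (-(2 * (π:ℂ) * Complex.I) * ((a * u + b * u ^ γ : ℝ) : ℂ)) * ((ν u : ℝ) : ℂ)‖ ≤ M * |1 - 1/2| :=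
        intervalIntegral.norm_integral_le_of_norm_le_const (fun u _ => hnorm1 u)
      have h2 : Real.sqrt (1 + r) ≤ 2 := by
        have h3 : Real.sqrt (1 + r) ≤ Real.sqrt (2 ^ 2) := Real.sqrt_le_sqrt (by nlinarith)
        rwa [Real.sqrt_sq (by norm_num)] at h3
      have h4 : M / 2 ≤ C₁ / Real.sqrt (1 + r) := by
        apply div_le_div₀ hC₁.le (by linarith) hsq1r h2
      calc ‖_‖ ≤ M * |1 - 1/2| := h1
        _ = M / 2 := by
            rw [show (1:ℝ) - 1/2 = 1/2 by norm_num, abs_of_nonneg (by norm_num : (0:ℝ) ≤ (1:ℝ)/2)]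
            ring
        _ ≤ C₁ / Real.sqrt (1 + r) := h4
    · -- large frequencies
      have hab : r ≤ |a| + |b| := by
        rw [hrdef]
        have h1 : Real.sqrt (a ^ 2 + b ^ 2) ≤ Real.sqrt ((|a| + |b|) ^ 2) :=
          Real.sqrt_le_sqrt (by nlinarith [sq_abs a, sq_abs b, mul_nonneg (abs_nonneg a) (abs_nonneg b)])
        rwa [Real.sqrt_sq (by positivity)] at h1
      by_cases hcase : 2 * γ * |b| ≤ |a|
      · -- non-stationary case: |a| dominates
        have hba : |b| ≤ |a| := by nlinarith [abs_nonneg b]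
        have hra : r ≤ 2 * |a| := by linarith
        have ha2 : 0 < |a| := by linarith
        have hlow : ∀ u ∈ Icc (1/2 : ℝ) 1, |a| / 2 ≤ |a + b * γ * u ^ (γ - 1)| := by
          intro u hu
          have hu0 : (0:ℝ) < u := by linarith [hu.1]
          have hup : 0 ≤ u ^ (γ - 1) := (Real.rpow_pos_of_pos hu0 _).le
          have hu1 : u ^ (γ - 1) ≤ 1 := Real.rpow_le_one hu0.le hu.2 (by linarith)
          have hw : |b * γ * u ^ (γ - 1)| ≤ |a| / 2 := by
            rw [abs_mul, abs_mul, abs_of_pos (show (0:ℝ) < γ by linarith), abs_of_nonneg hup]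
            calc |b| * γ * u ^ (γ - 1) ≤ |b| * γ * 1 := by
                  apply mul_le_mul_of_nonneg_left hu1 (by positivity)
              _ = |b| * γ := by ring
              _ ≤ |a| / 2 := by nlinarith
          have htri : |a| ≤ |a + b * γ * u ^ (γ - 1)| + |b * γ * u ^ (γ - 1)| := by
            calc |a| = |(a + b * γ * u ^ (γ - 1)) - b * γ * u ^ (γ - 1)| := by ring_nf
              _ ≤ |a + b * γ * u ^ (γ - 1)| + |b * γ * u ^ (γ - 1)| := abs_sub _ _
          linarith
        have hbd := L1 γ a b M (|a| / 2) (1/2) 1 hγ hM (by positivity) le_rfl le_rfl (by norm_num)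
          ν hν hν1 hν2 hlow
        have h15 : Real.sqrt (1 + r) ≤ (3/2) * r := by
          have h3 : Real.sqrt (1 + r) ≤ Real.sqrt (((3/2) * r) ^ 2) := Real.sqrt_le_sqrt (by nlinarith)
          rwa [Real.sqrt_sq (by positivity)] at h3
        calc ‖_‖ ≤ M / (|a| / 2) := hbd
          _ = 2 * M / |a| := by ring
          _ ≤ 2 * M / (r / 2) := by
              apply div_le_div_of_nonneg_left (by positivity) (by positivity) (by linarith)
          _ = 4 * M / r := by ring
          _ ≤ 6 * M / Real.sqrt (1 + r) := by
              rw [div_le_div_iff₀ (by linarith) hsq1r]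
              nlinarith
          _ ≤ C₁ / Real.sqrt (1 + r) := div_le_div₀ hC₁.le h6MC₁ hsq1r le_rfl
      · -- stationary case: |b| dominates
        push_neg at hcase
        have hb0 : 0 < |b| := by
          rcases (abs_nonneg b).lt_or_eq with h | h
          · exact h
          · exfalso; rw [← h] at hcase; simp at hcase; linarith [abs_nonneg a, hcase]
        set lam : ℝ := γ * (γ - 1) * (2:ℝ) ^ ((2:ℝ) - γ) * |b| with hlamdef
        have hlam : 0 < lam := by positivity
        set ρ : ℝ := Real.sqrt lam with hρdef
        have hρ : 0 < ρ := Real.sqrt_pos.mpr hlam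
        have hρsq : ρ ^ 2 = lam := Real.sq_sqrt hlam.le
        set ψ : ℝ → ℝ := fun u => a + b * γ * u ^ (γ - 1) with hψdef
        have hLip : ∀ u ∈ Icc (1/2 : ℝ) 1, ∀ v ∈ Icc (1/2 : ℝ) 1, lam * |u - v| ≤ |ψ u - ψ v| := by
          intro u hu v hv
          have key : ∀ x ∈ Icc (1/2 : ℝ) 1, ∀ y ∈ Icc (1/2 : ℝ) 1, y ≤ x →
              lam * |x - y| ≤ |ψ x - ψ y| := by
            intro x hx y hy hyx
            have hs := slope_lb γ hγ hy.1 hx.2 hyx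
            have hdiff : ψ x - ψ y = b * γ * (x ^ (γ - 1) - y ^ (γ - 1)) := by
              simp only [hψdef]; ring
            rw [hdiff, abs_mul, abs_mul, abs_of_pos (show (0:ℝ) < γ by linarith)]
            have hmono : 0 ≤ x ^ (γ - 1) - y ^ (γ - 1) := by
              have := Real.rpow_le_rpow (by linarith [hy.1] : (0:ℝ) ≤ y) hyx (by linarith : (0:ℝ) ≤ γ - 1)
              linarith
            rw [abs_of_nonneg hmono, abs_of_nonneg (by linarith : (0:ℝ) ≤ x - y)]
            calc lam * (x - y) = |b| * γ * ((γ - 1) * (2:ℝ) ^ ((2:ℝ) - γ) * (x - y)) := by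
                  rw [hlamdef]; ring
              _ ≤ |b| * γ * (x ^ (γ - 1) - y ^ (γ - 1)) := by
                  apply mul_le_mul_of_nonneg_left hs (by positivity)
          rcases le_total v u with h | h
          · exact key u hu v hv h
          · rw [← abs_neg (u - v), ← abs_neg (ψ u - ψ v)]
            rw [show -(u - v) = v - u by ring, show -(ψ u - ψ v) = ψ v - ψ u by ring]
            exact key v hv u hu h
        have hJ : ‖∫ u in (1/2 : ℝ)..1, Complex.exp (-(2 * (π:ℂ) * Complex.I) * ((a * u + b * u ^ γ : ℝ) : ℂ)) * ((ν u : ℝ) : ℂ)‖ ≤ 6 * M / ρ := by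
          by_cases hns : ∀ u ∈ Icc (1/2 : ℝ) 1, ρ ≤ |ψ u|
          · have hbd := L1 γ a b M ρ (1/2) 1 hγ hM hρ le_rfl le_rfl (by norm_num)
              ν hν hν1 hν2 (by simpa [hψdef] using hns)
            calc ‖_‖ ≤ M / ρ := hbd
              _ ≤ 6 * M / ρ := by
                  apply div_le_div₀ (by positivity) (by linarith) hρ le_rfl
          · push_neg at hns
            obtain ⟨u₀, hu₀, hu₀ρ⟩ := hns
            set δ : ℝ := 2 * ρ / lam with hδdef
            have hδ : 0 < δ := by positivity
            have hld : lam * δ = 2 * ρ := by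
              rw [hδdef, mul_comm, div_mul_cancel₀ _ (ne_of_gt hlam)]
            set p : ℝ := max (1/2 : ℝ) (u₀ - δ) with hpdef
            set q : ℝ := min (1 : ℝ) (u₀ + δ) with hqdef
            have hp1 : (1/2 : ℝ) ≤ p := le_max_left _ _
            have hpu : p ≤ u₀ := max_le hu₀.1 (by linarith)
            have huq : u₀ ≤ q := le_min hu₀.2 (by linarith)
            have hq1 : q ≤ 1 := min_le_left _ _
            have hpq : p ≤ q := hpu.trans huq
            have hpmem : p ∈ Icc (1/2 : ℝ) 1 := ⟨hp1, hpu.trans hu₀.2⟩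
            have hqmem : q ∈ Icc (1/2 : ℝ) 1 := ⟨le_trans hu₀.1 huq, hq1⟩
            set F : ℝ → ℂ := fun u => Complex.exp (-(2 * (π:ℂ) * Complex.I) * ((a * u + b * u ^ γ : ℝ) : ℂ)) * ((ν u : ℝ) : ℂ) with hFdef
            have hFcont : ContinuousOn F (Icc (1/2 : ℝ) 1) := by
              apply ContinuousOn.mul
              · apply Complex.continuous_exp.comp_continuousOn
                apply ContinuousOn.mul continuousOn_const
                apply Complex.continuous_ofReal.comp_continuousOn
                apply ContinuousOn.add
                · exact (continuous_const.mul continuous_id).continuousOn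
                · apply ContinuousOn.mul continuousOn_const
                  exact continuousOn_id.rpow_const
                    (fun x hx => Or.inl (by intro h0; simp only [id_eq] at h0; rw [h0] at hx; norm_num at hx))
              · exact Complex.continuous_ofReal.comp_continuousOn hν.continuous.continuousOn
            have husub : ∀ {x y : ℝ}, x ∈ Icc (1/2:ℝ) 1 → y ∈ Icc (1/2:ℝ) 1 → uIcc x y ⊆ Icc (1/2:ℝ) 1 := by
              intro x y hx hy
              rw [show Icc (1/2:ℝ) 1 = uIcc (1/2:ℝ) 1 by rw [uIcc_of_le (by norm_num)]]
              apply uIcc_subset_uIcc <;> rw [uIcc_of_le (by norm_num : (1/2:ℝ) ≤ 1)]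
              exacts [hx, hy]
            have hFint : ∀ {x y : ℝ}, x ∈ Icc (1/2:ℝ) 1 → y ∈ Icc (1/2:ℝ) 1 → IntervalIntegrable F volume x y := by
              intro x y hx hy
              exact (hFcont.mono (husub hx hy)).intervalIntegrable
            have h12mem : (1/2:ℝ) ∈ Icc (1/2:ℝ) 1 := ⟨le_rfl, by norm_num⟩
            have h1mem : (1:ℝ) ∈ Icc (1/2:ℝ) 1 := ⟨by norm_num, le_rfl⟩
            have heq1 : ∫ u in (1/2 : ℝ)..1, F u =
                (∫ u in (1/2 : ℝ)..p, F u) + ((∫ u in p..q, F u) + (∫ u in q..(1:ℝ), F u)) := by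
              rw [integral_add_adjacent_intervals (hFint hpmem hqmem) (hFint hqmem h1mem),
                integral_add_adjacent_intervals (hFint h12mem hpmem) (hFint hpmem h1mem)]
            have hlowside : ∀ x ∈ Icc (1/2:ℝ) 1, δ ≤ |x - u₀| → ρ ≤ |ψ x| := by
              intro x hx hdist
              have h1 := hLip x hx u₀ hu₀
              have h2 : 2 * ρ ≤ lam * |x - u₀| := by
                rw [← hld]
                exact mul_le_mul_of_nonneg_left hdist hlam.le
              have h3 := abs_sub (ψ x) (ψ u₀)
              linarith
            have hbd1 : ‖∫ u in (1/2 : ℝ)..p, F u‖ ≤ M / ρ := by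
              by_cases hcut : u₀ - δ ≤ 1/2
              · rw [show p = (1/2:ℝ) from max_eq_left hcut, intervalIntegral.integral_same]
                simp only [norm_zero]
                positivity
              · have hpe : p = u₀ - δ := max_eq_right (le_of_lt (not_le.mp hcut))
                apply L1 γ a b M ρ (1/2) p hγ hM hρ le_rfl hpmem.2 hp1 ν hν hν1 hν2
                intro u hu
                have humem : u ∈ Icc (1/2:ℝ) 1 := ⟨hu.1, hu.2.trans hpmem.2⟩
                apply hlowside u humem
                rw [abs_sub_comm, abs_of_nonneg (by linarith [hu.2, hpu] : (0:ℝ) ≤ u₀ - u)]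
                have : u ≤ u₀ - δ := hpe ▸ hu.2
                linarith
            have hbd3 : ‖∫ u in q..(1:ℝ), F u‖ ≤ M / ρ := by
              by_cases hcut : 1 ≤ u₀ + δ
              · rw [show q = (1:ℝ) from min_eq_left hcut, intervalIntegral.integral_same]
                simp only [norm_zero]
                positivity
              · have hqe : q = u₀ + δ := min_eq_right (le_of_lt (not_le.mp hcut))
                apply L1 γ a b M ρ q 1 hγ hM hρ hqmem.1 le_rfl hq1 ν hν hν1 hν2
                intro u hu
                have humem : u ∈ Icc (1/2:ℝ) 1 := ⟨le_trans hqmem.1 hu.1, hu.2⟩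
                apply hlowside u humem
                rw [abs_of_nonneg (by linarith [hu.1, huq] : (0:ℝ) ≤ u - u₀)]
                have : u₀ + δ ≤ u := hqe ▸ hu.1
                linarith
            have hbd2 : ‖∫ u in p..q, F u‖ ≤ 4 * M / ρ := by
              have h1 : ‖∫ u in p..q, F u‖ ≤ M * |q - p| :=
                intervalIntegral.norm_integral_le_of_norm_le_const (fun u _ => hnorm1 u)
              have h2 : |q - p| ≤ 2 * δ := by
                rw [abs_of_nonneg (by linarith : (0:ℝ) ≤ q - p)]
                have hq' : q ≤ u₀ + δ := min_le_right _ _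
                have hp' : u₀ - δ ≤ p := le_max_right _ _
                linarith
              have h3 : M * (2 * δ) = 4 * M / ρ := by
                rw [hδdef]
                rw [show lam = ρ * ρ by rw [← hρsq]; ring]
                field_simp
                ring
              calc ‖∫ u in p..q, F u‖ ≤ M * |q - p| := h1
                _ ≤ M * (2 * δ) := mul_le_mul_of_nonneg_left h2 hM.le
                _ = 4 * M / ρ := h3
            calc ‖∫ u in (1/2 : ℝ)..1, F u‖
                = ‖(∫ u in (1/2 : ℝ)..p, F u) + ((∫ u in p..q, F u) + (∫ u in q..(1:ℝ), F u))‖ := by rw [heq1]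
              _ ≤ ‖∫ u in (1/2 : ℝ)..p, F u‖ + (‖∫ u in p..q, F u‖ + ‖∫ u in q..(1:ℝ), F u‖) :=
                  (norm_add_le _ _).trans (by gcongr; exact norm_add_le _ _)
              _ ≤ M / ρ + (4 * M / ρ + M / ρ) := by
                  exact add_le_add hbd1 (add_le_add hbd2 hbd3)
              _ = 6 * M / ρ := by ring
        -- convert 6M/ρ to the target bound
        have hKsq : K ^ 2 = γ * (γ - 1) * (2:ℝ) ^ ((2:ℝ) - γ) / (2 * (2 * γ + 1)) :=
          Real.sq_sqrt (by positivity)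
        have hK1r : K ^ 2 * (1 + r) ≤ lam := by
          rw [hKsq, hlamdef]
          have hrb : r ≤ (2 * γ + 1) * |b| := by nlinarith [hab, hcase]
          have h1r2 : 1 + r ≤ 2 * r := by linarith
          rw [div_mul_eq_mul_div, div_le_iff₀ (by positivity)]
          nlinarith [mul_le_mul_of_nonneg_left
            (show 1 + r ≤ 2 * (2 * γ + 1) * |b| by nlinarith) hApos.le]
        have hρlb : K * Real.sqrt (1 + r) ≤ ρ := by
          rw [hρdef]
          calc K * Real.sqrt (1 + r) = Real.sqrt (K ^ 2 * (1 + r)) := by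
                rw [Real.sqrt_mul (sq_nonneg K), Real.sqrt_sq hK.le]
            _ ≤ Real.sqrt lam := Real.sqrt_le_sqrt hK1r
        calc ‖_‖ ≤ 6 * M / ρ := hJ
          _ ≤ 6 * M / (K * Real.sqrt (1 + r)) := by
              apply div_le_div_of_nonneg_left (by positivity) (by positivity) hρlb
          _ = (6 * M / K) / Real.sqrt (1 + r) := by rw [div_div]
          _ ≤ C₁ / Real.sqrt (1 + r) := by
              apply div_le_div₀ hC₁.le ?_ hsq1r le_rfl
              rw [hC₁def]
              linarith
  exact hmain.trans_eq (div_eq_mul_inv _ _)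


/-- Uniform oscillatory-integral estimate: for `ε ∈ C¹(ℝ)` vanishing for `|x| < 1/2`
and for `|x| ≥ 1`, with `‖ε‖_∞, ‖ε'‖_∞ ≤ M`, one has
`|∫ e^{-2πi(au + b|u|^γ)} ε(u) du| ≤ c (1 + |(a,b)|)^{-1/2}` with `c = c(γ, M)`. -/
theorem stmt5 (γ : ℝ) (hγ : 2 < γ) (M : ℝ) (hM : 0 < M) :
    ∃ c : ℝ, 0 < c ∧
      ∀ ε : ℝ → ℝ, ContDiff ℝ 1 ε →
        (∀ x : ℝ, |x| < 1/2 → ε x = 0) → (∀ x : ℝ, 1 ≤ |x| → ε x = 0) →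
        (∀ x, |ε x| ≤ M) → (∀ x, |deriv ε x| ≤ M) →
        ∀ a b : ℝ,
          ‖∫ u : ℝ, Complex.exp (-(2 * (π : ℂ) * Complex.I) *
              ((a * u + b * |u| ^ γ : ℝ) : ℂ)) * ((ε u : ℝ) : ℂ)‖ ≤
            c * (1 + Real.sqrt (a ^ 2 + b ^ 2)) ^ (-(1/2) : ℝ) := by
  have hApos : 0 < γ * (γ - 1) * (2:ℝ) ^ ((2:ℝ) - γ) := by
    have := Real.rpow_pos_of_pos (show (0:ℝ) < 2 by norm_num) ((2:ℝ) - γ)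
    exact mul_pos (by nlinarith) this
  set K : ℝ := Real.sqrt (γ * (γ - 1) * (2:ℝ) ^ ((2:ℝ) - γ) / (2 * (2 * γ + 1))) with hKdef
  have hK : 0 < K := Real.sqrt_pos.mpr (by positivity)
  set C₁ : ℝ := 6 * M + 6 * M / K with hC₁def
  have hC₁ : 0 < C₁ := by positivity
  refine ⟨2 * C₁, by positivity, ?_⟩
  intro ε hεC hεsmall hεbig hεb1 hεb2 a b
  set f : ℝ → ℂ := fun u => Complex.exp (-(2 * (π : ℂ) * Complex.I) *
    ((a * u + b * |u| ^ γ : ℝ) : ℂ)) * ((ε u : ℝ) : ℂ) with hfdef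
  have hγ0 : (0:ℝ) < γ := by linarith
  have hfcont : Continuous f := by
    apply Continuous.mul
    · apply Complex.continuous_exp.comp
      apply Continuous.mul continuous_const
      apply Complex.continuous_ofReal.comp
      apply Continuous.add
      · exact continuous_const.mul continuous_id
      · exact continuous_const.mul
          (continuous_abs.rpow_const (fun x => Or.inr hγ0.le))
    · exact Complex.continuous_ofReal.comp (hεC.continuous)
  have hfsupp : ∀ u : ℝ, u ∉ Ioo (-1:ℝ) 1 → f u = 0 := by
    intro u hu
    have h1 : 1 ≤ |u| := by
      simp only [mem_Ioo, not_and_or, not_lt] at hu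
      rcases hu with h | h
      · rw [abs_of_nonpos (by linarith)]; linarith
      · rw [abs_of_nonneg (by linarith)]; linarith
    rw [hfdef]
    simp [hεbig u h1]
  have h1 : ∫ u : ℝ, f u = ∫ u in Ioo (-1:ℝ) 1, f u := by
    rw [← MeasureTheory.integral_indicator measurableSet_Ioo]
    congr 1
    funext u
    by_cases h : u ∈ Ioo (-1:ℝ) 1
    · rw [indicator_of_mem h]
    · rw [indicator_of_notMem h, hfsupp u h]
  have h2 : ∫ u in Ioo (-1:ℝ) 1, f u = ∫ u in (-1:ℝ)..1, f u := by
    rw [intervalIntegral.integral_of_le (by norm_num), integral_Ioc_eq_integral_Ioo]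
  have hint : ∀ x y : ℝ, IntervalIntegrable f volume x y :=
    fun x y => hfcont.intervalIntegrable x y
  have h3 : ∫ u in (-1:ℝ)..1, f u =
      (∫ u in (-1:ℝ)..(-(1/2):ℝ), f u) + ((∫ u in (-(1/2):ℝ)..(1/2:ℝ), f u) +
        (∫ u in (1/2:ℝ)..1, f u)) := by
    rw [integral_add_adjacent_intervals (hint (-(1/2)) (1/2)) (hint (1/2) 1),
      integral_add_adjacent_intervals (hint (-1) (-(1/2))) (hint (-(1/2)) 1)]
  have hmid : ∫ u in (-(1/2):ℝ)..(1/2:ℝ), f u = 0 := by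
    rw [intervalIntegral.integral_of_le (by norm_num), integral_Ioc_eq_integral_Ioo]
    rw [setIntegral_congr_fun measurableSet_Ioo
      (show EqOn f (fun _ => (0:ℂ)) (Ioo (-(1/2):ℝ) (1/2:ℝ)) from fun u hu => by
        have : |u| < 1/2 := abs_lt.mpr ⟨hu.1, hu.2⟩
        rw [hfdef]
        simp [hεsmall u this])]
    simp
  have hneg : ∫ u in (-1:ℝ)..(-(1/2):ℝ), f u = ∫ u in (1/2:ℝ)..1, f (-u) :=
    (intervalIntegral.integral_comp_neg f).symm
  -- positive side
  have hpos1 : ∫ u in (1/2:ℝ)..1, f u =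
      ∫ u in (1/2:ℝ)..1, Complex.exp (-(2 * (π:ℂ) * Complex.I) *
        ((a * u + b * u ^ γ : ℝ) : ℂ)) * ((ε u : ℝ) : ℂ) := by
    apply integral_congr
    intro u hu
    rw [uIcc_of_le (by norm_num)] at hu
    rw [hfdef]
    simp only
    rw [abs_of_nonneg (by linarith [hu.1] : (0:ℝ) ≤ u)]
  have hbound1 : ‖∫ u in (1/2:ℝ)..1, f u‖ ≤ C₁ * (1 + Real.sqrt (a^2+b^2)) ^ (-(1/2) : ℝ) := by
    rw [hpos1]
    exact L2 γ M hγ hM a b ε hεC hεb1 hεb2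
  -- negative side
  have hνC : ContDiff ℝ 1 (fun u : ℝ => ε (-u)) := hεC.comp (contDiff_id.neg)
  have hνb1 : ∀ x : ℝ, |(fun u : ℝ => ε (-u)) x| ≤ M := fun x => hεb1 (-x)
  have hνb2 : ∀ x : ℝ, |deriv (fun u : ℝ => ε (-u)) x| ≤ M := by
    intro x
    have hd : HasDerivAt (fun u : ℝ => ε (-u)) (deriv ε (-x) * (-1)) x := by
      exact HasDerivAt.comp x (((hεC.differentiable one_ne_zero) (-x)).hasDerivAt) (hasDerivAt_neg x)
    rw [hd.deriv]
    rw [abs_mul]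
    simpa using hεb2 (-x)
  have hneg1 : ∫ u in (1/2:ℝ)..1, f (-u) =
      ∫ u in (1/2:ℝ)..1, Complex.exp (-(2 * (π:ℂ) * Complex.I) *
        (((-a) * u + b * u ^ γ : ℝ) : ℂ)) * (((fun u : ℝ => ε (-u)) u : ℝ) : ℂ) := by
    apply integral_congr
    intro u hu
    rw [uIcc_of_le (by norm_num)] at hu
    rw [hfdef]
    simp only
    have : a * -u + b * |(-u)| ^ γ = -a * u + b * u ^ γ := by
      rw [abs_neg, abs_of_nonneg (by linarith [hu.1] : (0:ℝ) ≤ u)]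
      ring
    rw [this]
  have hbound2 : ‖∫ u in (1/2:ℝ)..1, f (-u)‖ ≤ C₁ * (1 + Real.sqrt (a^2+b^2)) ^ (-(1/2) : ℝ) := by
    rw [hneg1]
    have := L2 γ M hγ hM (-a) b (fun u : ℝ => ε (-u)) hνC hνb1 hνb2
    rwa [show (-a)^2 = a^2 by ring] at this
  -- assemble
  rw [h1, h2, h3, hmid, hneg]
  calc ‖(∫ u in (1/2:ℝ)..1, f (-u)) + (0 + ∫ u in (1/2:ℝ)..1, f u)‖
      ≤ ‖∫ u in (1/2:ℝ)..1, f (-u)‖ + ‖(0:ℂ) + ∫ u in (1/2:ℝ)..1, f u‖ := norm_add_le _ _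
    _ = ‖∫ u in (1/2:ℝ)..1, f (-u)‖ + ‖∫ u in (1/2:ℝ)..1, f u‖ := by rw [zero_add]
    _ ≤ C₁ * (1 + Real.sqrt (a^2+b^2)) ^ (-(1/2) : ℝ) + C₁ * (1 + Real.sqrt (a^2+b^2)) ^ (-(1/2) : ℝ) :=
        add_le_add hbound2 hbound1
    _ = 2 * C₁ * (1 + Real.sqrt (a^2+b^2)) ^ (-(1/2) : ℝ) := by ring
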